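/- Let R be a commutative ring and q ∈ R with q^{n+1} = 0. Define the R-algebra homomorphism ι : R[[x₁,x₂]]/(x₁x₂ − q) → R((x₁)) ⊕ R((x₂)) by x₁ ↦ (x₁, q/x₂) and x₂ ↦ (q/x₁, x₂). Then ι is injective. -/

import Mathlib

/- The gluing map `ι : R[[x₁,x₂]]/(x₁x₂ - q) → R((x₁)) ⊕ R((x₂))`,
`f(x₁,x₂) ↦ (f(x₁, q/x₁), f(q/x₂, x₂))`, characterized on coefficients
(the sums are finite since `q ^ (n+1) = 0`), is injective. -/
theorem iota_injective (R : Type*) [CommRing R] (n : ℕ) (q : R) (hq : q ^ (n + 1) = 0)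
    (ι : (MvPowerSeries (Fin 2) R ⧸
        Ideal.span {MvPowerSeries.X (0 : Fin 2) * MvPowerSeries.X 1 -
          (MvPowerSeries.C (σ := Fin 2) (R := R) q)}) →
      LaurentSeries R × LaurentSeries R)
    (hι₁ : ∀ (f : MvPowerSeries (Fin 2) R) (k : ℤ),
      ((ι (Ideal.Quotient.mk _ f)).1).coeff k =
        ∑ j ∈ Finset.range (n + 1),
          if 0 ≤ k + (j : ℤ) then
            q ^ j * MvPowerSeries.coeff (R := R)
              (Finsupp.single (0 : Fin 2) (k + (j : ℤ)).toNat + Finsupp.single 1 j) f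
          else 0)
    (hι₂ : ∀ (f : MvPowerSeries (Fin 2) R) (k : ℤ),
      ((ι (Ideal.Quotient.mk _ f)).2).coeff k =
        ∑ j ∈ Finset.range (n + 1),
          if 0 ≤ k + (j : ℤ) then
            q ^ j * MvPowerSeries.coeff (R := R)
              (Finsupp.single (0 : Fin 2) j + Finsupp.single 1 (k + (j : ℤ)).toNat) f
          else 0) :
    Function.Injective ι := by
  classical
  intro a b hab
  obtain ⟨f, rfl⟩ := Ideal.Quotient.mk_surjective a
  obtain ⟨g, rfl⟩ := Ideal.Quotient.mk_surjective b
  set d : MvPowerSeries (Fin 2) R := f - g with hd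
  -- telescoping helper
  have tele : ∀ F : ℕ → R, F (n + 1) = 0 →
      ∑ j ∈ Finset.range (n + 1), F (j + 1) = -(F 0) + ∑ j ∈ Finset.range (n + 1), F j := by
    intro F hF
    have h1 := Finset.sum_range_succ' F (n + 1)
    have h2 := Finset.sum_range_succ F (n + 1)
    rw [hF, add_zero] at h2
    linear_combination h2 - h1
  -- the key coefficient identities for d
  have key1 : ∀ a : ℕ, ∑ j ∈ Finset.range (n + 1),
      q ^ j * MvPowerSeries.coeff (R := R)
        (Finsupp.single (0 : Fin 2) (a + j) + Finsupp.single 1 j) d = 0 := by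
    intro a
    have e1 := hι₁ f (a : ℤ)
    have e2 := hι₁ g (a : ℤ)
    rw [hab] at e1
    have e3 := e1.symm.trans e2
    simp only [← Nat.cast_add, Int.toNat_natCast, Int.natCast_nonneg, if_true] at e3
    simp only [hd, map_sub, mul_sub, Finset.sum_sub_distrib, e3, sub_self]
  have key2 : ∀ b : ℕ, ∑ j ∈ Finset.range (n + 1),
      q ^ j * MvPowerSeries.coeff (R := R)
        (Finsupp.single (0 : Fin 2) j + Finsupp.single 1 (b + j)) d = 0 := by
    intro b
    have e1 := hι₂ f (b : ℤ)
    have e2 := hι₂ g (b : ℤ)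
    rw [hab] at e1
    have e3 := e1.symm.trans e2
    simp only [← Nat.cast_add, Int.toNat_natCast, Int.natCast_nonneg, if_true] at e3
    simp only [hd, map_sub, mul_sub, Finset.sum_sub_distrib, e3, sub_self]
  rw [Ideal.Quotient.eq, Ideal.mem_span_singleton']
  -- the witness
  set H : MvPowerSeries (Fin 2) R := (fun m => ∑ j ∈ Finset.range (n + 1),
      q ^ j * MvPowerSeries.coeff (R := R)
        (m + Finsupp.single (0 : Fin 2) (j + 1) + Finsupp.single 1 (j + 1)) d :
      (Fin 2 →₀ ℕ) → R) with hH
  have hcoeff : ∀ m : Fin 2 →₀ ℕ, MvPowerSeries.coeff (R := R) m H =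
      ∑ j ∈ Finset.range (n + 1),
        q ^ j * MvPowerSeries.coeff (R := R)
          (m + Finsupp.single (0 : Fin 2) (j + 1) + Finsupp.single 1 (j + 1)) d :=
    fun _ => rfl
  refine ⟨H, ?_⟩
  have hX : (MvPowerSeries.X (0 : Fin 2) * MvPowerSeries.X 1 : MvPowerSeries (Fin 2) R) =
      MvPowerSeries.monomial (R := R) (Finsupp.single (0 : Fin 2) 1 + Finsupp.single 1 1) 1 := by
    rw [MvPowerSeries.X_def, MvPowerSeries.X_def, MvPowerSeries.monomial_mul_monomial, one_mul]
  ext m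
  rw [mul_sub, map_sub, hX, MvPowerSeries.coeff_mul_monomial, MvPowerSeries.coeff_mul_C]
  set F : ℕ → R := fun j => q ^ j * MvPowerSeries.coeff (R := R)
      (m + Finsupp.single (0 : Fin 2) j + Finsupp.single 1 j) d with hFdef
  have hF : F (n + 1) = 0 := by simp [hFdef, hq]
  have hF0 : F 0 = MvPowerSeries.coeff (R := R) m d := by simp [hFdef]
  have hHm : MvPowerSeries.coeff (R := R) m H * q = ∑ j ∈ Finset.range (n + 1), F (j + 1) := by
    rw [hcoeff, Finset.sum_mul]
    refine Finset.sum_congr rfl fun j _ => ?_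
    simp only [hFdef, pow_succ]
    ring
  by_cases hm : Finsupp.single (0 : Fin 2) 1 + Finsupp.single 1 1 ≤ m
  · rw [if_pos hm]
    have h0 : 1 ≤ m 0 := by
      have := Finsupp.le_def.mp hm 0
      simpa using this
    have h1 : 1 ≤ m 1 := by
      have := Finsupp.le_def.mp hm 1
      simpa using this
    have hsub : ∀ j : ℕ, m - (Finsupp.single (0 : Fin 2) 1 + Finsupp.single 1 1)
        + Finsupp.single (0 : Fin 2) (j + 1) + Finsupp.single 1 (j + 1)
        = m + Finsupp.single (0 : Fin 2) j + Finsupp.single 1 j := by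
      intro j
      ext i
      fin_cases i <;>
        simp only [Finsupp.add_apply, Finsupp.tsub_apply, Finsupp.single_apply] <;>
        simp <;> omega
    have hHe : MvPowerSeries.coeff (R := R)
        (m - (Finsupp.single (0 : Fin 2) 1 + Finsupp.single 1 1)) H =
        ∑ j ∈ Finset.range (n + 1), F j := by
      rw [hcoeff]
      exact Finset.sum_congr rfl fun j _ => by rw [hsub j]
    rw [hHe, hHm, tele F hF, ← hd, ← hF0]
    ring
  · rw [if_neg hm, zero_sub]
    have hcase : m 0 = 0 ∨ m 1 = 0 := by
      by_contra hcon
      push_neg at hcon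
      apply hm
      rw [Finsupp.le_def]
      intro i
      fin_cases i <;> simp only [Finsupp.add_apply, Finsupp.single_apply] <;> simp <;> omega
    have hkey : ∑ j ∈ Finset.range (n + 1), F j = 0 := by
      rcases hcase with hc | hc
      · rw [← key2 (m 1)]
        refine Finset.sum_congr rfl fun j _ => ?_
        have harg : m + Finsupp.single (0 : Fin 2) j + Finsupp.single 1 j
            = Finsupp.single (0 : Fin 2) j + Finsupp.single 1 (m 1 + j) := by
          ext i
          fin_cases i <;>
            simp only [Finsupp.add_apply, Finsupp.single_apply] <;> simp <;> omega
        simp only [hFdef, harg]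
      · rw [← key1 (m 0)]
        refine Finset.sum_congr rfl fun j _ => ?_
        have harg : m + Finsupp.single (0 : Fin 2) j + Finsupp.single 1 j
            = Finsupp.single (0 : Fin 2) (m 0 + j) + Finsupp.single 1 j := by
          ext i
          fin_cases i <;>
            simp only [Finsupp.add_apply, Finsupp.single_apply] <;> simp <;> omega
        simp only [hFdef, harg]
    rw [hHm, tele F hF, hkey, add_zero, neg_neg, hF0]
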